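/- In a commutative idempotent involutive residuated lattice, for every element x and every y with 0_x ⊑ y ⊑ 1_x (monoidal order), one has ¬y = y → 0_x. -/
import Mathlib


/-- A commutative idempotent involutive residuated lattice. -/
class CIdInRL (α : Type*) extends Lattice α, CommMonoid α, Zero α where
  arrow : α → α → α
  residuation : ∀ x y z : α, x * y ≤ z ↔ y ≤ arrow x z
  idem : ∀ x : α, x * x = x
  involutive : ∀ x : α, arrow (arrow x 0) 0 = x

namespace CIdInRL
variable {α : Type*} [CIdInRL α]
/-- linear negation ¬x := x → 0 -/
def neg (x : α) : α := arrow x 0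
/-- 0_x := x ∧ ¬x -/
def zx (x : α) : α := x ⊓ neg x
/-- 1_x := x ∨ ¬x -/
def ox (x : α) : α := x ⊔ neg x
/-- monoidal order x ⊑ y iff x·y = x -/
def mleq (x y : α) : Prop := x * y = x
end CIdInRL

namespace CIdInRL
variable {α : Type*} [CIdInRL α]

lemma le_neg_iff (a b : α) : a ≤ neg b ↔ b * a ≤ 0 :=
  (residuation b a 0).symm

lemma neg_neg' (a : α) : neg (neg a) = a := involutive a

lemma mul_le_mul_left'' (c : α) {a b : α} (h : a ≤ b) : c * a ≤ c * b :=
  (residuation c a (c * b)).mpr (h.trans ((residuation c b (c * b)).mp le_rfl))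

lemma mul_neg_le (z : α) : z * neg z ≤ 0 := (le_neg_iff _ _).mp le_rfl

lemma neg_antitone' {a b : α} (h : a ≤ b) : neg b ≤ neg a := by
  rw [le_neg_iff]
  calc a * neg b ≤ b * neg b := by
        rw [mul_comm a, mul_comm b]; exact mul_le_mul_left'' _ h
    _ ≤ 0 := mul_neg_le b

lemma arrow_eq_neg_mul (a z : α) : arrow a z = neg (a * neg z) := by
  apply le_antisymm
  · rw [le_neg_iff]
    have h1 : a * arrow a z ≤ z := (residuation a (arrow a z) z).mpr le_rfl
    have : a * neg z * arrow a z = neg z * (a * arrow a z) := by rw [mul_comm a (neg z), mul_assoc]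
    rw [this]
    calc neg z * (a * arrow a z) ≤ neg z * z := mul_le_mul_left'' _ h1
      _ ≤ 0 := by rw [mul_comm]; exact mul_neg_le z
  · rw [← residuation]
    have h1 : a * neg z * neg (a * neg z) ≤ 0 := mul_neg_le _
    have h2 : neg z * (a * neg (a * neg z)) ≤ 0 := by
      have : neg z * (a * neg (a * neg z)) = a * neg z * neg (a * neg z) := by rw [← mul_assoc, mul_comm (neg z) a]
      rw [this]; exact h1
    have := (le_neg_iff (a * neg (a * neg z)) (neg z)).mpr h2
    rwa [neg_neg'] at this

lemma neg_inf (a b : α) : neg (a ⊓ b) = neg a ⊔ neg b := by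
  apply le_antisymm
  · have h : neg (neg a ⊔ neg b) ≤ a ⊓ b :=
      le_inf (by simpa [neg_neg'] using neg_antitone' (le_sup_left (a := neg a) (b := neg b)))
        (by simpa [neg_neg'] using neg_antitone' (le_sup_right (a := neg a) (b := neg b)))
    have := neg_antitone' h
    rwa [neg_neg'] at this
  · exact sup_le (neg_antitone' inf_le_left) (neg_antitone' inf_le_right)

lemma neg_zx (x : α) : neg (zx x) = ox x := by
  rw [zx, ox, neg_inf, neg_neg', sup_comm]

end CIdInRL

open CIdInRL in
theorem stmt3 {α : Type*} [CIdInRL α] (x y : α)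
    (hy : mleq (zx x) y ∧ mleq y (ox x)) :
    neg y = arrow y (zx x) := by
  rw [arrow_eq_neg_mul, neg_zx, hy.2]
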